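/- Let T1 and T2 be two Euclidean triangles glued along a common edge to form a hinge H (a planar quadrilateral region). Then any line segment E contained in H joining the two non-adjacent edges (one edge of T1 and one edge of T2, neither being the common edge) has length at least the minimum of the altitudes of T1 and T2. -/

import Mathlib

open Metric Set

noncomputable section

/-- The distance from the vertex `x` of a triangle `x y z` to the line through the opposite
side, i.e. the altitude of the triangle through `x`. -/
noncomputable def altitudeFrom (x y z : EuclideanSpace ℝ (Fin 2)) : ℝ :=
  Metric.infDist x (affineSpan ℝ ({y, z} : Set (EuclideanSpace ℝ (Fin 2))) : Set (EuclideanSpace ℝ (Fin 2)))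

/-- The minimum of the three altitudes of the triangle `x y z`. -/
noncomputable def minAltitude (x y z : EuclideanSpace ℝ (Fin 2)) : ℝ :=
  min (altitudeFrom x y z) (min (altitudeFrom y x z) (altitudeFrom z x y))

/-- If `a ∈ S` (an affine subspace), then the distance from the point `(1-u)•a + u•b` to `S`
is at least `u` times the distance from `b` to `S`, for `0 ≤ u`. -/
lemma aux_infDist_comb {E : Type*} [NormedAddCommGroup E] [NormedSpace ℝ E]
    (S : AffineSubspace ℝ E) (a b : E) (ha : a ∈ S) {u : ℝ} (hu : 0 ≤ u) :
    u * Metric.infDist b (S : Set E) ≤ Metric.infDist ((1 - u) • a + u • b) (S : Set E) := by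
  rcases eq_or_lt_of_le hu with rfl | hu'
  · simpa using Metric.infDist_nonneg
  · by_contra hlt
    push_neg at hlt
    obtain ⟨z, hz, hzd⟩ := (Metric.infDist_lt_iff ⟨a, ha⟩).1 hlt
    apply absurd hzd
    push_neg
    have hw : AffineMap.lineMap a z (u⁻¹ : ℝ) ∈ S := AffineMap.lineMap_mem _ ha hz
    set w : E := AffineMap.lineMap a z (u⁻¹ : ℝ) with hwdef
    have hkey : (1 - u) • a + u • b - z = u • (b - w) := by
      have hw' : w = u⁻¹ • (z - a) + a := by
        rw [hwdef, AffineMap.lineMap_apply_module']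
      rw [hw']
      match_scalars <;> field_simp <;> ring
    have hdist : dist ((1 - u) • a + u • b) z = u * dist b w := by
      rw [dist_eq_norm, dist_eq_norm, hkey, norm_smul, Real.norm_eq_abs,
        abs_of_nonneg hu]
    rw [hdist]
    exact mul_le_mul_of_nonneg_left (Metric.infDist_le_dist_of_mem hw) hu

/-- **hinge lemma.** Let `T₁ = conv{a,b,c}` and `T₂ = conv{a,b,d}` be two
Euclidean triangles glued along the common edge `[a,b]` so that they form a planar
quadrilateral region (their intersection is exactly the segment `[a,b]`).  Any line segment
`E = [p,q]` contained in the hinge `T₁ ∪ T₂` joining the two non-adjacent edges `[a,c]` and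
`[b,d]` has length at least the minimum of the altitudes of `T₁` and `T₂`. -/
theorem hinge_segment_length_ge_min_altitude
    (a b c d : EuclideanSpace ℝ (Fin 2))
    (h₁ : AffineIndependent ℝ ![a, b, c])
    (h₂ : AffineIndependent ℝ ![a, b, d])
    (hglue : convexHull ℝ {a, b, c} ∩ convexHull ℝ {a, b, d} = segment ℝ a b)
    (p q : EuclideanSpace ℝ (Fin 2))
    (hp : p ∈ segment ℝ a c) (hq : q ∈ segment ℝ b d)
    (hE : segment ℝ p q ⊆ convexHull ℝ {a, b, c} ∪ convexHull ℝ {a, b, d}) :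
    min (minAltitude a b c) (minAltitude a b d) ≤ dist p q := by
  classical
  let E2 := EuclideanSpace ℝ (Fin 2)
  -- the two triangles are closed
  have hfin1 : ({a, b, c} : Set E2).Finite := (Set.finite_singleton c).insert b |>.insert a
  have hfin2 : ({a, b, d} : Set E2).Finite := (Set.finite_singleton d).insert b |>.insert a
  have hT1 : IsClosed (convexHull ℝ ({a, b, c} : Set E2)) :=
    (hfin1.isCompact_convexHull (𝕜 := ℝ)).isClosed
  have hT2 : IsClosed (convexHull ℝ ({a, b, d} : Set E2)) :=
    (hfin2.isCompact_convexHull (𝕜 := ℝ)).isClosed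
  -- endpoints lie in the respective triangles
  have hpT1 : p ∈ convexHull ℝ ({a, b, c} : Set E2) := by
    have : segment ℝ a c ⊆ convexHull ℝ ({a, b, c} : Set E2) := by
      rw [← convexHull_pair]
      exact convexHull_mono (by intro x hx; rcases hx with h | h <;> simp [h])
    exact this hp
  have hqT2 : q ∈ convexHull ℝ ({a, b, d} : Set E2) := by
    have : segment ℝ b d ⊆ convexHull ℝ ({a, b, d} : Set E2) := by
      rw [← convexHull_pair]
      exact convexHull_mono (by intro x hx; rcases hx with h | h <;> simp [h])
    exact this hq
  -- the segment [p,q] meets the common edge [a,b]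
  have hconn : IsPreconnected (segment ℝ p q) := (convex_segment p q).isPreconnected
  obtain ⟨r, hrseg, hrT1, hrT2⟩ :=
    isPreconnected_closed_iff.1 hconn _ _ hT1 hT2 hE
      ⟨p, left_mem_segment ℝ p q, hpT1⟩ ⟨q, right_mem_segment ℝ p q, hqT2⟩
  have hrab : r ∈ segment ℝ a b := by
    rw [← hglue]; exact ⟨hrT1, hrT2⟩
  obtain ⟨v, u, hv, hu, hvu, hr⟩ := hrab
  -- distance bounds via the auxiliary lemma
  have haS : a ∈ affineSpan ℝ ({a, c} : Set E2) := mem_affineSpan ℝ (by simp)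
  have hbS : b ∈ affineSpan ℝ ({b, d} : Set E2) := mem_affineSpan ℝ (by simp)
  have hpS : p ∈ (affineSpan ℝ ({a, c} : Set E2) : Set E2) := by
    have : segment ℝ a c ⊆ (affineSpan ℝ ({a, c} : Set E2) : Set E2) := by
      rw [← convexHull_pair]; exact convexHull_subset_affineSpan _
    exact this hp
  have hqS : q ∈ (affineSpan ℝ ({b, d} : Set E2) : Set E2) := by
    have : segment ℝ b d ⊆ (affineSpan ℝ ({b, d} : Set E2) : Set E2) := by
      rw [← convexHull_pair]; exact convexHull_subset_affineSpan _
    exact this hq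
  have h1 : u * altitudeFrom b a c ≤ dist p r := by
    have := aux_infDist_comb (affineSpan ℝ ({a, c} : Set E2)) a b haS hu
    have hrw : (1 - u) • a + u • b = r := by rw [← hr]; congr 1; rw [← hvu]; ring_nf
    rw [hrw] at this
    calc u * altitudeFrom b a c ≤ Metric.infDist r (affineSpan ℝ ({a, c} : Set E2) : Set E2) :=
          this
      _ ≤ dist r p := Metric.infDist_le_dist_of_mem hpS
      _ = dist p r := dist_comm r p
  have h2 : v * altitudeFrom a b d ≤ dist r q := by
    have := aux_infDist_comb (affineSpan ℝ ({b, d} : Set E2)) b a hbS hv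
    have hrw : (1 - v) • b + v • a = r := by
      rw [← hr, add_comm]; congr 1; rw [← hvu]; ring_nf
    rw [hrw] at this
    calc v * altitudeFrom a b d ≤ Metric.infDist r (affineSpan ℝ ({b, d} : Set E2) : Set E2) :=
          this
      _ ≤ dist r q := Metric.infDist_le_dist_of_mem hqS
  -- combine
  have hsum : dist p r + dist r q = dist p q := dist_add_dist_of_mem_segment hrseg
  set m := min (minAltitude a b c) (minAltitude a b d) with hm
  have hmb : m ≤ altitudeFrom b a c :=
    (min_le_left _ _).trans ((min_le_right _ _).trans (min_le_left _ _))
  have hma : m ≤ altitudeFrom a b d :=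
    (min_le_right _ _).trans (min_le_left _ _)
  calc m = u * m + v * m := by rw [← add_mul, add_comm u v, hvu, one_mul]
    _ ≤ u * altitudeFrom b a c + v * altitudeFrom a b d := by
        exact add_le_add (mul_le_mul_of_nonneg_left hmb hu) (mul_le_mul_of_nonneg_left hma hv)
    _ ≤ dist p r + dist r q := add_le_add h1 h2
    _ = dist p q := hsum
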